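/- If (A, m, Δ) is a finite-dimensional associative dialgebra with counit satisfying the module/Frobenius compatibility, then the bilinear form B(x,y) = ε(xy) is nondegenerate, so A is a Frobenius algebra. -/
import Mathlib


open TensorProduct

/-- If `A` is a finite-dimensional unital associative dialgebra over a field
`k`, with coassociative coproduct `Δ` and counit `ε`, satisfying the module/Frobenius
compatibility `Δ (x*y) = x • Δ y = (Δ x) • y`, then the bilinear form `B(x,y) = ε (x*y)` is
nondegenerate — so `A` is a Frobenius algebra. -/
theorem counital_dialgebra_is_frobenius
    (k : Type*) [Field k] (A : Type*) [Ring A] [Algebra k A] [FiniteDimensional k A]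
    (Δ : A →ₗ[k] A ⊗[k] A)
    (hΔ_coassoc : ∀ a : A,
      (TensorProduct.assoc k A A A) (TensorProduct.map Δ LinearMap.id (Δ a))
        = TensorProduct.map LinearMap.id Δ (Δ a))
    (ε : A →ₗ[k] k)
    (hcounit_l : ∀ a : A, (TensorProduct.lid k A) (TensorProduct.map ε LinearMap.id (Δ a)) = a)
    (hcounit_r : ∀ a : A, (TensorProduct.rid k A) (TensorProduct.map LinearMap.id ε (Δ a)) = a)
    (hcompat_left : ∀ x y : A,
      Δ (x * y) = TensorProduct.map (LinearMap.mulLeft k x) LinearMap.id (Δ y))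
    (hcompat_right : ∀ x y : A,
      Δ (x * y) = TensorProduct.map LinearMap.id (LinearMap.mulRight k y) (Δ x)) :
    (∀ x : A, (∀ y : A, ε (x * y) = 0) → x = 0) ∧
    (∀ y : A, (∀ x : A, ε (x * y) = 0) → y = 0) := by
  constructor
  · intro x hx
    have h1 : Δ x = TensorProduct.map (LinearMap.mulLeft k x) LinearMap.id (Δ 1) := by
      simpa using hcompat_left x 1
    have h2 : TensorProduct.map ε LinearMap.id (Δ x) = 0 := by
      rw [h1, ← LinearMap.comp_apply, ← TensorProduct.map_comp]
      have hε : ε.comp (LinearMap.mulLeft k x) = 0 := by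
        ext y; simpa using hx y
      rw [hε]
      have : TensorProduct.map (0 : A →ₗ[k] k) (LinearMap.id.comp (LinearMap.id : A →ₗ[k] A))
          = 0 := by
        ext a b; simp
      rw [this]; rfl
    have := hcounit_l x
    rw [h2] at this
    simpa using this.symm
  · intro y hy
    have h1 : Δ y = TensorProduct.map LinearMap.id (LinearMap.mulRight k y) (Δ 1) := by
      simpa using hcompat_right 1 y
    have h2 : TensorProduct.map LinearMap.id ε (Δ y) = 0 := by
      rw [h1, ← LinearMap.comp_apply, ← TensorProduct.map_comp]
      have hε : ε.comp (LinearMap.mulRight k y) = 0 := by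
        ext x; simpa using hy x
      rw [hε]
      have : TensorProduct.map (LinearMap.id.comp (LinearMap.id : A →ₗ[k] A)) (0 : A →ₗ[k] k)
          = 0 := by
        ext a b; simp
      rw [this]; rfl
    have := hcounit_r y
    rw [h2] at this
    simpa using this.symm
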